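/- For every integer k ≥ 1 and real c in (1, ∞), if c ≤ 3 then for all integers k ≥ 3 one has (2kc/(c+1)² − 1)² ≥ ((c−1)/(c+1))^{2k}; i.e., all of Love's modes are neutrally stable or stable when the aspect ratio does not exceed 3. -/
import Mathlib

/-- If the aspect ratio c of the elliptic vortex satisfies 1 < c ≤ 3, then for
every integer k ≥ 3 one has (2kc/(c+1)² − 1)² ≥ ((c−1)/(c+1))^{2k}, i.e. all of
Love's modes are stable or neutrally stable. -/
theorem love_stable_below_three (c : ℝ) (hc : 1 < c) (hc3 : c ≤ 3) (k : ℕ) (hk : 3 ≤ k) :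
    ((c - 1) / (c + 1)) ^ (2 * k) ≤ (2 * k * c / (c + 1) ^ 2 - 1) ^ 2 := by
  have hc0 : (0:ℝ) < c + 1 := by linarith
  have hkr : (3:ℝ) ≤ (k:ℝ) := by exact_mod_cast hk
  have ht0 : 0 ≤ (c - 1) / (c + 1) := div_nonneg (by linarith) hc0.le
  have ht : (c - 1) / (c + 1) ≤ 1/2 := by rw [div_le_iff₀ hc0]; linarith
  have hL : ((c-1)/(c+1))^(2*k) ≤ (1/2:ℝ)^(2*k) := pow_le_pow_left₀ ht0 ht _
  have hL2 : (1/2:ℝ)^(2*k) ≤ (1/2:ℝ)^6 :=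
    pow_le_pow_of_le_one (by norm_num) (by norm_num) (by omega)
  have hb : (1/8:ℝ) ≤ 2 * k * c / (c + 1) ^ 2 - 1 := by
    rw [le_sub_iff_add_le, le_div_iff₀ (by positivity)]
    nlinarith [mul_nonneg (by linarith : (0:ℝ) ≤ 3*c - 1) (by linarith : (0:ℝ) ≤ 3 - c),
      mul_nonneg (by linarith : (0:ℝ) ≤ (k:ℝ) - 3) (by linarith : (0:ℝ) ≤ c)]
  have hR : (1/64:ℝ) ≤ (2*k*c/(c+1)^2 - 1)^2 := by nlinarith [hb]
  have h6 : (1/2:ℝ)^6 = 1/64 := by norm_num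
  linarith
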